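/- If n ≥ 1 can be written as a sum of four evil numbers each at least m, then n can be written as a sum of one, two, or three evil numbers each at least m. -/

import Mathlib

namespace EvilAux

/-- binary digit sum -/
def S (x : ℕ) : ℕ := (Nat.digits 2 x).sum

lemma S_zero : S 0 = 0 := by unfold S; simp

lemma S_rec (x : ℕ) (h : x ≠ 0) : S x = x % 2 + S (x / 2) := by
  unfold S
  rw [Nat.digits_def' (by norm_num : 1 < 2) (Nat.pos_of_ne_zero h), List.sum_cons]

lemma S_double (x : ℕ) : S (2 * x) = S x := by
  rcases Nat.eq_zero_or_pos x with h | h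
  · simp [h]
  · rw [S_rec (2 * x) (by omega)]
    simp [Nat.mul_div_cancel_left, Nat.mul_mod_right]

lemma S_odd (x : ℕ) : S (2 * x + 1) = S x + 1 := by
  rw [S_rec (2 * x + 1) (by omega)]
  have h1 : (2 * x + 1) % 2 = 1 := by omega
  have h2 : (2 * x + 1) / 2 = x := by omega
  rw [h1, h2]; omega

/-- flipping a clear bit up changes digit-sum parity -/
lemma flip_add (j : ℕ) : ∀ u : ℕ, u.testBit j = false → S (u + 2 ^ j) % 2 = (S u + 1) % 2 := by
  induction j with
  | zero =>
    intro u h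
    have : u % 2 = 0 := by
      have := Nat.testBit_zero u
      rw [h] at this
      rcases Nat.mod_two_eq_zero_or_one u with h2 | h2
      · exact h2
      · simp [h2] at this
    obtain ⟨k, rfl⟩ : ∃ k, u = 2 * k := ⟨u / 2, by omega⟩
    rw [pow_zero, S_odd, S_double]
  | succ j ih =>
    intro u h
    have hb : (u / 2).testBit j = false := by
      rw [← Nat.testBit_succ]; exact h
    have ihh := ih (u / 2) hb
    have hdecomp : u = 2 * (u / 2) + u % 2 := by omega
    have hsum : u + 2 ^ (j + 1) = 2 * (u / 2 + 2 ^ j) + u % 2 := by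
      rw [pow_succ]; omega
    rcases Nat.mod_two_eq_zero_or_one u with h2 | h2
    · have e1 : S (u + 2 ^ (j+1)) = S (u / 2 + 2 ^ j) := by
        rw [hsum, h2, Nat.add_zero, S_double]
      have e2 : S u = S (u / 2) := by
        conv_lhs => rw [hdecomp, h2, Nat.add_zero]
        rw [S_double]
      omega
    · have e1 : S (u + 2 ^ (j+1)) = S (u / 2 + 2 ^ j) + 1 := by
        rw [hsum, h2, S_odd]
      have e2 : S u = S (u / 2) + 1 := by
        conv_lhs => rw [hdecomp, h2]
        rw [S_odd]
      omega

lemma S_pow (j : ℕ) : S (2 ^ j) % 2 = 1 := by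
  have := flip_add j 0 (Nat.zero_testBit j)
  simpa [S_zero] using this

/-- splitting off a high clear-bit region: r < 2^j gives parity flip for r + 2^j -/
lemma S_add_pow (r j : ℕ) (h : r < 2 ^ j) : S (r + 2 ^ j) % 2 = (S r + 1) % 2 :=
  flip_add j r (Nat.testBit_lt_two_pow h)
/-- Type-II failure structure for a pairing (S₁, S₂). -/
def TII (A B : ℕ) : Prop :=
  ∃ p k r, k + 3 ≤ p ∧ r < 2 ^ k ∧ S r % 2 = 1 ∧
    A = 2 ^ p + 2 ^ k + r ∧ B = 2 ^ (k + 1) + 2 ^ k + r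

lemma odd_half (x P k r : ℕ) (hP : k + 1 ≤ P) (hrk : r < 2 ^ k) (hrt : S r % 2 = 1)
    (hx : 2 * x = 2 ^ P + 2 ^ k + r) : S x % 2 = 1 := by
  rcases Nat.eq_zero_or_pos k with hk | hk
  · subst hk; interval_cases r
    · simp [S_zero] at hrt
  · obtain ⟨k', rfl⟩ : ∃ k', k = k' + 1 := ⟨k - 1, by omega⟩
    obtain ⟨P', rfl⟩ : ∃ P', P = P' + 1 := ⟨P - 1, by omega⟩
    have e1 : (2:ℕ) ^ (P' + 1) = 2 * 2 ^ P' := by ring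
    have e2 : (2:ℕ) ^ (k' + 1) = 2 * 2 ^ k' := by ring
    have hre : r % 2 = 0 := by omega
    obtain ⟨r', rfl⟩ : ∃ r', r = 2 * r' := ⟨r / 2, by omega⟩
    have hx' : x = 2 ^ P' + 2 ^ k' + r' := by omega
    have hr' : r' < 2 ^ k' := by omega
    have hk'P : (2:ℕ) ^ k' + r' < 2 ^ P' := by
      have : (2:ℕ) ^ (k' + 1) ≤ 2 ^ P' := Nat.pow_le_pow_right (by norm_num) (by omega)
      omega
    have h1 : S (r' + 2 ^ k') % 2 = (S r' + 1) % 2 := S_add_pow r' k' hr'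
    have h2 : S (r' + 2 ^ k' + 2 ^ P') % 2 = (S (r' + 2 ^ k') + 1) % 2 :=
      S_add_pow _ P' (by omega)
    have h3 : S (2 * r') = S r' := S_double r'
    have hxe : x = r' + 2 ^ k' + 2 ^ P' := by omega
    rw [hxe]
    omega

lemma doubled (x w n : ℕ) (hx : S x % 2 = 0) (hn : n = 2 * x + w) (hno : S n % 2 = 1)
    (hG : w = 2 * x ∨ TII w (2 * x) ∨ TII (2 * x) w) : False := by
  rcases hG with hG | hG | hG
  · have : n = 2 * (2 * x) := by omega
    rw [this, S_double, S_double] at hno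
    omega
  · obtain ⟨p, k, r, hpk, hrk, hrt, hA, hB⟩ := hG
    have := odd_half x (k + 1) k r (le_refl _) hrk hrt hB
    omega
  · obtain ⟨p, k, r, hpk, hrk, hrt, hA, hB⟩ := hG
    have := odd_half x p k r (by omega) hrk hrt hA
    omega

lemma pow_interval_uniq (x p q : ℕ) (h1 : 2 ^ p ≤ x) (h2 : x < 2 ^ (p + 1))
    (h3 : 2 ^ q ≤ x) (h4 : x < 2 ^ (q + 1)) : p = q := by
  by_contra hne
  rcases Nat.lt_or_ge p q with h | h
  · have : (2:ℕ) ^ (p + 1) ≤ 2 ^ q := Nat.pow_le_pow_right (by norm_num) (by omega)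
    omega
  · have : (2:ℕ) ^ (q + 1) ≤ 2 ^ p := Nat.pow_le_pow_right (by norm_num) (by omega)
    omega

lemma tii_uniq (A B A' B' : ℕ) (h : TII A B) (h' : TII A' B') (hs : A + B = A' + B') :
    A = A' ∧ B = B' := by
  obtain ⟨p, k, r, hpk, hrk, hrt, hA, hB⟩ := h
  obtain ⟨p', k', r', hpk', hrk', hrt', hA', hB'⟩ := h'
  have e1 : (2:ℕ) ^ (k + 1) = 2 * 2 ^ k := by ring
  have e2 : (2:ℕ) ^ (k + 2) = 4 * 2 ^ k := by ring
  have e3 : (2:ℕ) ^ (k + 3) = 8 * 2 ^ k := by ring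
  have e1' : (2:ℕ) ^ (k' + 1) = 2 * 2 ^ k' := by ring
  have e2' : (2:ℕ) ^ (k' + 2) = 4 * 2 ^ k' := by ring
  have e3' : (2:ℕ) ^ (k' + 3) = 8 * 2 ^ k' := by ring
  have hp3 : (2:ℕ) ^ (k + 3) ≤ 2 ^ p := Nat.pow_le_pow_right (by norm_num) hpk
  have hp3' : (2:ℕ) ^ (k' + 3) ≤ 2 ^ p' := Nat.pow_le_pow_right (by norm_num) hpk'
  -- n := A + B = 2^p + 2^(k+2) + 2r
  have hpq : p = p' := by
    apply pow_interval_uniq (A + B) p p'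
    · omega
    · have : (2:ℕ) ^ (p + 1) = 2 * 2 ^ p := by ring
      omega
    · omega
    · have : (2:ℕ) ^ (p' + 1) = 2 * 2 ^ p' := by ring
      omega
  subst hpq
  have hkk : k + 2 = k' + 2 := by
    apply pow_interval_uniq (2 ^ (k + 2) + 2 * r) (k + 2) (k' + 2)
    · omega
    · have : (2:ℕ) ^ (k + 3) = 2 * 2 ^ (k + 2) := by ring
      omega
    · omega
    · have h4 : (2:ℕ) ^ (k' + 3) = 2 * 2 ^ (k' + 2) := by ring
      omega
  have : k = k' := by omega
  subst this
  omega

/-- clearing a set bit: decomposition with cleared bit -/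
lemma clear_bit (j : ℕ) : ∀ v : ℕ, v.testBit j = true →
    ∃ y, v = y + 2 ^ j ∧ y.testBit j = false := by
  induction j with
  | zero =>
    intro v h
    rw [Nat.testBit_zero] at h
    have h1 : v % 2 = 1 := by simpa using h
    refine ⟨v - 1, by omega, ?_⟩
    rw [Nat.testBit_zero]
    simp only [decide_eq_false_iff_not]
    omega
  | succ j ih =>
    intro v h
    rw [Nat.testBit_succ] at h
    obtain ⟨y', hy', hb'⟩ := ih (v / 2) h
    have hpow : (2:ℕ) ^ (j + 1) = 2 * 2 ^ j := by ring
    refine ⟨2 * y' + v % 2, by omega, ?_⟩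
    rw [Nat.testBit_succ]
    have : (2 * y' + v % 2) / 2 = y' := by omega
    rw [this]
    exact hb'

lemma flip_success (u v j m : ℕ) (hu : S u % 2 = 1) (hv : S v % 2 = 1)
    (hbu : u.testBit j = false) (hbv : v.testBit j = true)
    (hm : m ≤ v - 2 ^ j) (hmu : m ≤ u) :
    ∃ x y, S x % 2 = 0 ∧ S y % 2 = 0 ∧ m ≤ x ∧ m ≤ y ∧ x + y = u + v := by
  obtain ⟨y, hy, hyb⟩ := clear_bit j v hbv
  have hpos : 0 < 2 ^ j := Nat.pow_pos (n := j) (by norm_num)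
  have hm2 : m ≤ y := by omega
  refine ⟨u + 2 ^ j, y, ?_, ?_, by omega, hm2, by omega⟩
  · have := flip_add j u hbu; omega
  · have h2 := flip_add j y hyb
    rw [← hy] at h2
    omega

lemma S_one : S 1 = 1 := by
  have := S_odd 0
  simpa [S_zero] using this

lemma core (s1 s2 p q r : ℕ) (hqp : q < p) (hs1 : s1 = 2 ^ p + r) (hs2 : s2 = 2 ^ q + r)
    (hrq : r < 2 ^ q) (hr : S r % 2 = 0) (hno : S (s1 + s2) % 2 = 1) : TII s1 s2 := by
  rcases Nat.eq_zero_or_pos q with hq0 | hqpos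
  · exfalso
    subst hq0
    have hr0 : r = 0 := by omega
    have h1p : (1:ℕ) < 2 ^ p := Nat.one_lt_two_pow_iff.mpr (by omega)
    have hsum : s1 + s2 = 1 + 2 ^ p := by
      rw [hs1, hs2, hr0, pow_zero]
      omega
    rw [hsum] at hno
    have := S_add_pow 1 p h1p
    rw [S_one] at this
    omega
  · obtain ⟨k, rfl⟩ : ∃ k, q = k + 1 := ⟨q - 1, by omega⟩
    have h2q : (2:ℕ) ^ (k + 1) = 2 * 2 ^ k := by ring
    have h2kpos : 0 < (2:ℕ) ^ k := Nat.pow_pos (n := k) (by norm_num)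
    rcases Nat.lt_or_ge r (2 ^ k) with hsm | hbg
    · exfalso
      have hlt1 : 2 * r + 2 ^ (k + 1) < 2 ^ p := by
        have : (2:ℕ) ^ (k + 2) ≤ 2 ^ p := Nat.pow_le_pow_right (by norm_num) (by omega)
        have h2 : (2:ℕ) ^ (k + 2) = 4 * 2 ^ k := by ring
        omega
      have hsum : s1 + s2 = 2 * r + 2 ^ (k + 1) + 2 ^ p := by omega
      have e1 : S (2 * r + 2 ^ (k + 1)) % 2 = (S (2 * r) + 1) % 2 :=
        S_add_pow _ _ (by omega)
      have e2 : S (2 * r + 2 ^ (k + 1) + 2 ^ p) % 2 = (S (2 * r + 2 ^ (k + 1)) + 1) % 2 :=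
        S_add_pow _ _ hlt1
      have e3 : S (2 * r) = S r := S_double r
      rw [hsum] at hno
      omega
    · obtain ⟨r₂, hr₂⟩ : ∃ r₂, r = r₂ + 2 ^ k := ⟨r - 2 ^ k, by omega⟩
      have hr₂lt : r₂ < 2 ^ k := by omega
      have er : S r % 2 = (S r₂ + 1) % 2 := by rw [hr₂]; exact S_add_pow _ _ hr₂lt
      have hrt : S r₂ % 2 = 1 := by omega
      rcases Nat.lt_or_ge (k + 2) p with hp3 | hp2
      · -- p ≥ k + 3 : genuine TII
        refine ⟨p, k, r₂, by omega, hr₂lt, hrt, by omega, by omega⟩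
      · -- p = k + 2 : contradiction with n odious
        exfalso
        have hpk : p = k + 2 := by omega
        have h2k2 : (2:ℕ) ^ (k + 2) = 4 * 2 ^ k := by ring
        have h2k3 : (2:ℕ) ^ (k + 3) = 8 * 2 ^ k := by ring
        have hsum : s1 + s2 = 2 * r₂ + 2 ^ (k + 3) := by
          subst hpk; omega
        have e2 : S (2 * r₂ + 2 ^ (k + 3)) % 2 = (S (2 * r₂) + 1) % 2 :=
          S_add_pow _ _ (by omega)
        have e3 : S (2 * r₂) = S r₂ := S_double r₂
        rw [hsum] at hno
        omega

lemma top_of_fail (v m j : ℕ) (hbv : v.testBit j = true)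
    (hm : 2 * m ≤ v) (hf : v - 2 ^ j < m) : 2 ^ j ≤ v ∧ v < 2 ^ (j + 1) := by
  have hge := Nat.ge_two_pow_of_testBit hbv
  have hpos : 0 < 2 ^ j := Nat.pow_pos (n := j) (by norm_num)
  refine ⟨hge, ?_⟩
  by_contra hcon
  push_neg at hcon
  have h2 : (2:ℕ) ^ (j + 1) = 2 * 2 ^ j := by ring
  omega

/-- decompose a number at its top bit, given bit j is set and v < 2^(j+1) -/
lemma top_decomp (v j : ℕ) (hbv : v.testBit j = true) (hlt : v < 2 ^ (j + 1)) :
    ∃ y, v = y + 2 ^ j ∧ y < 2 ^ j ∧ y = v % 2 ^ j := by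
  obtain ⟨y, hy, _⟩ := clear_bit j v hbv
  have h2 : (2:ℕ) ^ (j + 1) = 2 * 2 ^ j := by ring
  have hylt : y < 2 ^ j := by omega
  refine ⟨y, hy, hylt, ?_⟩
  rw [hy, Nat.add_mod_right, Nat.mod_eq_of_lt hylt]

lemma char (m s1 s2 : ℕ) (h1 : S s1 % 2 = 1) (h2 : S s2 % 2 = 1)
    (hm1 : 2 * m ≤ s1) (hm2 : 2 * m ≤ s2) (hno : S (s1 + s2) % 2 = 1)
    (FFa : ∀ j, s1.testBit j = true → s2.testBit j = false → s1 - 2 ^ j < m)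
    (FFb : ∀ j, s2.testBit j = true → s1.testBit j = false → s2 - 2 ^ j < m) :
    s1 = s2 ∨ TII s1 s2 ∨ TII s2 s1 := by
  by_cases hss : s1 = s2
  · exact Or.inl hss
  by_cases hj1 : ∃ i, s1.testBit i = true ∧ s2.testBit i = false
  · by_cases hj2 : ∃ i, s2.testBit i = true ∧ s1.testBit i = false
    · -- two-sided difference: main construction
      obtain ⟨j1, hb1, hb1'⟩ := hj1
      obtain ⟨j2, hb2, hb2'⟩ := hj2
      have T1 := top_of_fail s1 m j1 hb1 hm1 (FFa j1 hb1 hb1')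
      have T2 := top_of_fail s2 m j2 hb2 hm2 (FFb j2 hb2 hb2')
      have U1 : ∀ i, s1.testBit i = true → s2.testBit i = false → i = j1 := by
        intro i hi1 hi2
        have Ti := top_of_fail s1 m i hi1 hm1 (FFa i hi1 hi2)
        exact pow_interval_uniq s1 i j1 Ti.1 Ti.2 T1.1 T1.2
      have U2 : ∀ i, s2.testBit i = true → s1.testBit i = false → i = j2 := by
        intro i hi1 hi2
        have Ti := top_of_fail s2 m i hi1 hm2 (FFb i hi1 hi2)
        exact pow_interval_uniq s2 i j2 Ti.1 Ti.2 T2.1 T2.2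
      obtain ⟨y1, hy1, hy1lt, hy1mod⟩ := top_decomp s1 j1 hb1 T1.2
      obtain ⟨y2, hy2, hy2lt, hy2mod⟩ := top_decomp s2 j2 hb2 T2.2
      have hne12 : j1 ≠ j2 := by
        intro hcon
        rw [hcon] at hb1'
        rw [hb1'] at hb2
        exact Bool.false_ne_true hb2
      have hyy : y1 = y2 := by
        apply Nat.eq_of_testBit_eq
        intro i
        rw [hy1mod, hy2mod, Nat.testBit_mod_two_pow, Nat.testBit_mod_two_pow]
        by_cases heq : s1.testBit i = s2.testBit i
        · rcases hbi : s1.testBit i with _ | _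
          · rw [hbi] at heq
            rw [← heq]
            simp
          · rw [hbi] at heq
            have hbi2 : s2.testBit i = true := heq.symm
            rw [hbi2]
            have hij : i < j1 ↔ i < j2 := by
              constructor
              · intro hlt
                by_contra hge
                have hgt : j2 < i := by
                  rcases Nat.lt_or_ge j2 i with h | h
                  · exact h
                  · have : i = j2 := by omega
                    rw [this] at hbi
                    rw [hbi] at hb2'
                    exact absurd hb2' (by simp)
                have : (2:ℕ) ^ (j2 + 1) ≤ 2 ^ i := Nat.pow_le_pow_right (by norm_num) (by omega)
                have hge2 := Nat.ge_two_pow_of_testBit hbi2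
                omega
              · intro hlt
                by_contra hge
                have hgt : j1 < i := by
                  rcases Nat.lt_or_ge j1 i with h | h
                  · exact h
                  · have : i = j1 := by omega
                    rw [this] at hbi2
                    rw [hbi2] at hb1'
                    exact absurd hb1' (by simp)
                have : (2:ℕ) ^ (j1 + 1) ≤ 2 ^ i := Nat.pow_le_pow_right (by norm_num) (by omega)
                have hge1 := Nat.ge_two_pow_of_testBit hbi
                omega
            rcases Nat.lt_or_ge i j1 with h | h
            · rw [decide_eq_true h, decide_eq_true (hij.mp h)]
            · have h' : ¬ i < j1 := by omega
              have h'' : ¬ i < j2 := fun hc => h' (hij.mpr hc)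
              rw [decide_eq_false h', decide_eq_false h'']
        · rcases hbi : s1.testBit i with _ | _
          · have hbi2 : s2.testBit i = true := by
              rcases hb : s2.testBit i with _ | _
              · rw [hbi, hb] at heq; exact absurd rfl heq
              · rfl
            have hij2 : i = j2 := U2 i hbi2 hbi
            subst hij2
            simp [hbi]
          · have hbi2 : s2.testBit i = false := by
              rcases hb : s2.testBit i with _ | _
              · rfl
              · rw [hbi, hb] at heq; exact absurd rfl heq
            have hij1 : i = j1 := U1 i hbi hbi2
            subst hij1
            simp [hbi2]
      -- parity of the common part
      have hpar : S y1 % 2 = 0 := by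
        have := S_add_pow y1 j1 hy1lt
        rw [← hy1] at this
        omega
      -- apply core in the right order
      rcases Nat.lt_or_ge j2 j1 with hlt | hge
      · right; left
        exact core s1 s2 j1 j2 y1 hlt (by omega) (by omega)
          (by rw [hyy]; exact hy2lt) hpar hno
      · right; right
        have hlt : j1 < j2 := by omega
        refine core s2 s1 j2 j1 y2 hlt (by omega) (by omega)
          (by rw [← hyy]; exact hy1lt) (by rw [← hyy]; exact hpar) ?_
        rw [Nat.add_comm]
        exact hno
    · -- bits of s2 ⊆ bits of s1 : parity contradiction
      exfalso
      push_neg at hj2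
      obtain ⟨j1, hb1, hb1'⟩ := hj1
      have T1 := top_of_fail s1 m j1 hb1 hm1 (FFa j1 hb1 hb1')
      have U1 : ∀ i, s1.testBit i = true → s2.testBit i = false → i = j1 := by
        intro i hi1 hi2
        have Ti := top_of_fail s1 m i hi1 hm1 (FFa i hi1 hi2)
        exact pow_interval_uniq s1 i j1 Ti.1 Ti.2 T1.1 T1.2
      obtain ⟨y1, hy1, hy1lt, hy1mod⟩ := top_decomp s1 j1 hb1 T1.2
      have hys : y1 = s2 := by
        apply Nat.eq_of_testBit_eq
        intro i
        rw [hy1mod, Nat.testBit_mod_two_pow]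
        rcases hbi : s1.testBit i with _ | _
        · have hbi2 : s2.testBit i = false := by
            rcases hb : s2.testBit i with _ | _
            · rfl
            · have := hj2 i hb
              rw [hbi] at this
              exact absurd this (by simp)
          rw [hbi2]
          simp
        · rcases hb : s2.testBit i with _ | _
          · -- differing: i = j1, and i < j1 is false
            have hij : i = j1 := U1 i hbi hb
            subst hij
            simp
          · -- both true : i < j1
            have hilt : i < j1 := by
              rcases Nat.lt_or_ge i j1 with h | h
              · exact h
              · exfalso
                have hne : i ≠ j1 := by
                  intro hc
                  rw [hc] at hb
                  rw [hb] at hb1'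
                  exact absurd hb1' (by simp)
                have : (2:ℕ) ^ (j1 + 1) ≤ 2 ^ i := Nat.pow_le_pow_right (by norm_num) (by omega)
                have hgei := Nat.ge_two_pow_of_testBit hbi
                omega
            rw [decide_eq_true hilt]
            simp
      rw [hys] at hy1
      have := S_add_pow s2 j1 (hys ▸ hy1lt)
      rw [← hy1] at this
      omega
  · by_cases hj2 : ∃ i, s2.testBit i = true ∧ s1.testBit i = false
    · -- bits of s1 ⊆ bits of s2 : parity contradiction (mirror)
      exfalso
      push_neg at hj1
      obtain ⟨j2, hb2, hb2'⟩ := hj2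
      have T2 := top_of_fail s2 m j2 hb2 hm2 (FFb j2 hb2 hb2')
      have U2 : ∀ i, s2.testBit i = true → s1.testBit i = false → i = j2 := by
        intro i hi1 hi2
        have Ti := top_of_fail s2 m i hi1 hm2 (FFb i hi1 hi2)
        exact pow_interval_uniq s2 i j2 Ti.1 Ti.2 T2.1 T2.2
      obtain ⟨y2, hy2, hy2lt, hy2mod⟩ := top_decomp s2 j2 hb2 T2.2
      have hys : y2 = s1 := by
        apply Nat.eq_of_testBit_eq
        intro i
        rw [hy2mod, Nat.testBit_mod_two_pow]
        rcases hbi : s2.testBit i with _ | _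
        · have hbi1 : s1.testBit i = false := by
            rcases hb : s1.testBit i with _ | _
            · rfl
            · have := hj1 i hb
              rw [hbi] at this
              exact absurd this (by simp)
          rw [hbi1]
          simp
        · rcases hb : s1.testBit i with _ | _
          · have hij : i = j2 := U2 i hbi hb
            subst hij
            simp
          · have hilt : i < j2 := by
              rcases Nat.lt_or_ge i j2 with h | h
              · exact h
              · exfalso
                have hne : i ≠ j2 := by
                  intro hc
                  rw [hc] at hb
                  rw [hb] at hb2'
                  exact absurd hb2' (by simp)
                have : (2:ℕ) ^ (j2 + 1) ≤ 2 ^ i := Nat.pow_le_pow_right (by norm_num) (by omega)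
                have hgei := Nat.ge_two_pow_of_testBit hbi
                omega
            rw [decide_eq_true hilt]
            simp
      rw [hys] at hy2
      have := S_add_pow s1 j2 (hys ▸ hy2lt)
      rw [← hy2] at this
      omega
    · -- no differing bits at all: s1 = s2
      exfalso
      push_neg at hj1 hj2
      apply hss
      apply Nat.eq_of_testBit_eq
      intro i
      rcases hbi : s1.testBit i with _ | _
      · rcases hb : s2.testBit i with _ | _
        · rfl
        · have := hj2 i hb
          rw [hbi] at this
          exact absurd this (by simp)
      · have := hj1 i hbi
        rcases hb : s2.testBit i with _ | _
        · rw [hb] at this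
          exact absurd this (by simp)
        · rfl

lemma gswap {A B : ℕ} (h : A = B ∨ TII A B ∨ TII B A) : B = A ∨ TII B A ∨ TII A B := by
  rcases h with h | h | h
  · exact Or.inl h.symm
  · exact Or.inr (Or.inr h)
  · exact Or.inr (Or.inl h)

lemma main_contra (m n a b c d : ℕ)
    (ea : S a % 2 = 0) (eb : S b % 2 = 0) (ec : S c % 2 = 0) (ed : S d % 2 = 0)
    (hn : n = a + b + c + d) (hno : S n % 2 = 1)
    (G1 : a + b = c + d ∨ TII (a + b) (c + d) ∨ TII (c + d) (a + b))
    (G2 : a + c = b + d ∨ TII (a + c) (b + d) ∨ TII (b + d) (a + c))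
    (G3 : a + d = b + c ∨ TII (a + d) (b + c) ∨ TII (b + c) (a + d)) : False := by
  rcases G1 with e1 | t1 | t1'
  · rcases G2 with e2 | t2 | t2'
    · have h3 : a + d = 2 * a := by omega
      rw [h3] at G3
      exact doubled a (b + c) n ea (by omega) hno (gswap G3)
    · rcases G3 with e3 | t3 | t3'
      · have h2 : a + c = 2 * a := by omega
        rw [h2] at t2
        exact doubled a (b + d) n ea (by omega) hno (Or.inr (Or.inr t2))
      · obtain ⟨hA, hB⟩ := tii_uniq _ _ _ _ t2 t3 (by omega)
        exact doubled c (a + b) n ec (by omega) hno (Or.inl (by omega))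
      · obtain ⟨hA, hB⟩ := tii_uniq _ _ _ _ t2 t3' (by omega)
        exact doubled a (c + d) n ea (by omega) hno (Or.inl (by omega))
    · rcases G3 with e3 | t3 | t3'
      · have h2 : a + c = 2 * a := by omega
        rw [h2] at t2'
        exact doubled a (b + d) n ea (by omega) hno (Or.inr (Or.inl t2'))
      · obtain ⟨hA, hB⟩ := tii_uniq _ _ _ _ t2' t3 (by omega)
        exact doubled a (c + d) n ea (by omega) hno (Or.inl (by omega))
      · obtain ⟨hA, hB⟩ := tii_uniq _ _ _ _ t2' t3' (by omega)
        exact doubled c (a + b) n ec (by omega) hno (Or.inl (by omega))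
  · rcases G2 with e2 | t2 | t2'
    · rcases G3 with e3 | t3 | t3'
      · have h1 : a + b = 2 * a := by omega
        rw [h1] at t1
        exact doubled a (c + d) n ea (by omega) hno (Or.inr (Or.inr t1))
      · obtain ⟨hA, hB⟩ := tii_uniq _ _ _ _ t1 t3 (by omega)
        exact doubled b (a + c) n eb (by omega) hno (Or.inl (by omega))
      · obtain ⟨hA, hB⟩ := tii_uniq _ _ _ _ t1 t3' (by omega)
        exact doubled a (b + d) n ea (by omega) hno (Or.inl (by omega))
    · obtain ⟨hA, hB⟩ := tii_uniq _ _ _ _ t1 t2 (by omega)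
      have h3 : b + c = 2 * b := by omega
      rw [h3] at G3
      exact doubled b (a + d) n eb (by omega) hno G3
    · obtain ⟨hA, hB⟩ := tii_uniq _ _ _ _ t1 t2' (by omega)
      have h3 : a + d = 2 * a := by omega
      rw [h3] at G3
      exact doubled a (b + c) n ea (by omega) hno (gswap G3)
  · rcases G2 with e2 | t2 | t2'
    · rcases G3 with e3 | t3 | t3'
      · have h1 : a + b = 2 * a := by omega
        rw [h1] at t1'
        exact doubled a (c + d) n ea (by omega) hno (Or.inr (Or.inl t1'))
      · obtain ⟨hA, hB⟩ := tii_uniq _ _ _ _ t1' t3 (by omega)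
        exact doubled a (b + d) n ea (by omega) hno (Or.inl (by omega))
      · obtain ⟨hA, hB⟩ := tii_uniq _ _ _ _ t1' t3' (by omega)
        exact doubled b (a + c) n eb (by omega) hno (Or.inl (by omega))
    · obtain ⟨hA, hB⟩ := tii_uniq _ _ _ _ t1' t2 (by omega)
      have h3 : a + d = 2 * a := by omega
      rw [h3] at G3
      exact doubled a (b + c) n ea (by omega) hno (gswap G3)
    · obtain ⟨hA, hB⟩ := tii_uniq _ _ _ _ t1' t2' (by omega)
      have h3 : b + c = 2 * b := by omega
      rw [h3] at G3
      exact doubled b (a + d) n eb (by omega) hno G3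

end EvilAux

/-- A natural number is evil if its binary digit sum is even. -/
def IsEvil (k : ℕ) : Prop := (Nat.digits 2 k).sum % 2 = 0

open EvilAux in
theorem evil_four_to_three (m n : ℕ) (hn : 1 ≤ n)
    (h : ∃ a b c d : ℕ, IsEvil a ∧ IsEvil b ∧ IsEvil c ∧ IsEvil d ∧
      m ≤ a ∧ m ≤ b ∧ m ≤ c ∧ m ≤ d ∧ n = a + b + c + d) :
    (∃ a : ℕ, IsEvil a ∧ m ≤ a ∧ n = a) ∨
    (∃ a b : ℕ, IsEvil a ∧ IsEvil b ∧ m ≤ a ∧ m ≤ b ∧ n = a + b) ∨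
    (∃ a b c : ℕ, IsEvil a ∧ IsEvil b ∧ IsEvil c ∧ m ≤ a ∧ m ≤ b ∧ m ≤ c ∧
      n = a + b + c) := by
  obtain ⟨a, b, c, d, ea, eb, ec, ed, ma, mb, mc, md, hsum⟩ := h
  have ea' : S a % 2 = 0 := ea
  have eb' : S b % 2 = 0 := eb
  have ec' : S c % 2 = 0 := ec
  have ed' : S d % 2 = 0 := ed
  by_cases hne : S n % 2 = 0
  · exact Or.inl ⟨n, hne, by omega, rfl⟩
  have hno : S n % 2 = 1 := by omega
  by_cases hab : S (a + b) % 2 = 0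
  · exact Or.inr (Or.inr ⟨a + b, c, d, hab, ec, ed, by omega, mc, md, by omega⟩)
  by_cases hcd : S (c + d) % 2 = 0
  · exact Or.inr (Or.inr ⟨c + d, a, b, hcd, ea, eb, by omega, ma, mb, by omega⟩)
  by_cases hac : S (a + c) % 2 = 0
  · exact Or.inr (Or.inr ⟨a + c, b, d, hac, eb, ed, by omega, mb, md, by omega⟩)
  by_cases hbd : S (b + d) % 2 = 0
  · exact Or.inr (Or.inr ⟨b + d, a, c, hbd, ea, ec, by omega, ma, mc, by omega⟩)
  by_cases had : S (a + d) % 2 = 0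
  · exact Or.inr (Or.inr ⟨a + d, b, c, had, eb, ec, by omega, mb, mc, by omega⟩)
  by_cases hbc : S (b + c) % 2 = 0
  · exact Or.inr (Or.inr ⟨b + c, a, d, hbc, ea, ed, by omega, ma, md, by omega⟩)
  -- flips
  by_cases F1 : ∃ j, (a + b).testBit j = true ∧ (c + d).testBit j = false ∧ m ≤ (a + b) - 2 ^ j
  · obtain ⟨j, hbt, hbf, hmm⟩ := F1
    obtain ⟨x, y, hx, hy, hmx, hmy, hxy⟩ :=
      flip_success (c + d) (a + b) j m (by omega) (by omega) hbf hbt hmm (by omega)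
    exact Or.inr (Or.inl ⟨x, y, hx, hy, hmx, hmy, by omega⟩)
  by_cases F2 : ∃ j, (c + d).testBit j = true ∧ (a + b).testBit j = false ∧ m ≤ (c + d) - 2 ^ j
  · obtain ⟨j, hbt, hbf, hmm⟩ := F2
    obtain ⟨x, y, hx, hy, hmx, hmy, hxy⟩ :=
      flip_success (a + b) (c + d) j m (by omega) (by omega) hbf hbt hmm (by omega)
    exact Or.inr (Or.inl ⟨x, y, hx, hy, hmx, hmy, by omega⟩)
  by_cases F3 : ∃ j, (a + c).testBit j = true ∧ (b + d).testBit j = false ∧ m ≤ (a + c) - 2 ^ j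
  · obtain ⟨j, hbt, hbf, hmm⟩ := F3
    obtain ⟨x, y, hx, hy, hmx, hmy, hxy⟩ :=
      flip_success (b + d) (a + c) j m (by omega) (by omega) hbf hbt hmm (by omega)
    exact Or.inr (Or.inl ⟨x, y, hx, hy, hmx, hmy, by omega⟩)
  by_cases F4 : ∃ j, (b + d).testBit j = true ∧ (a + c).testBit j = false ∧ m ≤ (b + d) - 2 ^ j
  · obtain ⟨j, hbt, hbf, hmm⟩ := F4
    obtain ⟨x, y, hx, hy, hmx, hmy, hxy⟩ :=
      flip_success (a + c) (b + d) j m (by omega) (by omega) hbf hbt hmm (by omega)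
    exact Or.inr (Or.inl ⟨x, y, hx, hy, hmx, hmy, by omega⟩)
  by_cases F5 : ∃ j, (a + d).testBit j = true ∧ (b + c).testBit j = false ∧ m ≤ (a + d) - 2 ^ j
  · obtain ⟨j, hbt, hbf, hmm⟩ := F5
    obtain ⟨x, y, hx, hy, hmx, hmy, hxy⟩ :=
      flip_success (b + c) (a + d) j m (by omega) (by omega) hbf hbt hmm (by omega)
    exact Or.inr (Or.inl ⟨x, y, hx, hy, hmx, hmy, by omega⟩)
  by_cases F6 : ∃ j, (b + c).testBit j = true ∧ (a + d).testBit j = false ∧ m ≤ (b + c) - 2 ^ j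
  · obtain ⟨j, hbt, hbf, hmm⟩ := F6
    obtain ⟨x, y, hx, hy, hmx, hmy, hxy⟩ :=
      flip_success (a + d) (b + c) j m (by omega) (by omega) hbf hbt hmm (by omega)
    exact Or.inr (Or.inl ⟨x, y, hx, hy, hmx, hmy, by omega⟩)
  exfalso
  push_neg at F1 F2 F3 F4 F5 F6
  have FF1 : ∀ j, (a + b).testBit j = true → (c + d).testBit j = false → (a + b) - 2 ^ j < m := by
    intro j h1 h2
    exact Nat.lt_of_not_le (fun hc => absurd hc (by simpa using F1 j h1 h2))
  have FF2 : ∀ j, (c + d).testBit j = true → (a + b).testBit j = false → (c + d) - 2 ^ j < m := by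
    intro j h1 h2
    exact Nat.lt_of_not_le (fun hc => absurd hc (by simpa using F2 j h1 h2))
  have FF3 : ∀ j, (a + c).testBit j = true → (b + d).testBit j = false → (a + c) - 2 ^ j < m := by
    intro j h1 h2
    exact Nat.lt_of_not_le (fun hc => absurd hc (by simpa using F3 j h1 h2))
  have FF4 : ∀ j, (b + d).testBit j = true → (a + c).testBit j = false → (b + d) - 2 ^ j < m := by
    intro j h1 h2
    exact Nat.lt_of_not_le (fun hc => absurd hc (by simpa using F4 j h1 h2))
  have FF5 : ∀ j, (a + d).testBit j = true → (b + c).testBit j = false → (a + d) - 2 ^ j < m := by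
    intro j h1 h2
    exact Nat.lt_of_not_le (fun hc => absurd hc (by simpa using F5 j h1 h2))
  have FF6 : ∀ j, (b + c).testBit j = true → (a + d).testBit j = false → (b + c) - 2 ^ j < m := by
    intro j h1 h2
    exact Nat.lt_of_not_le (fun hc => absurd hc (by simpa using F6 j h1 h2))
  have G1 := char m (a + b) (c + d) (by omega) (by omega) (by omega) (by omega)
    (by have e : a + b + (c + d) = n := by omega
        rw [e]; exact hno) FF1 FF2
  have G2 := char m (a + c) (b + d) (by omega) (by omega) (by omega) (by omega)
    (by have e : a + c + (b + d) = n := by omega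
        rw [e]; exact hno) FF3 FF4
  have G3 := char m (a + d) (b + c) (by omega) (by omega) (by omega) (by omega)
    (by have e : a + d + (b + c) = n := by omega
        rw [e]; exact hno) FF5 FF6
  exact main_contra m n a b c d ea' eb' ec' ed' hsum hno G1 G2 G3
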